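/- For a set partition π of {1,…,k}, let Δ_π ∈ End((ℂ^N)^{⊗k}) be the diagonal operator whose entry at the tuple (i₁,…,i_k) ∈ {1,…,N}^k is 1 if i_u = i_v whenever u and v lie in the same block of π (i.e. π refines Ker(i₁,…,i_k)), and 0 otherwise. If N ≥ k, then the family (Δ_π), indexed by all set partitions π of {1,…,k}, is linearly independent in End((ℂ^N)^{⊗k}). -/

import Mathlib

open scoped Classical

/-- For a set partition `π` of `{1,…,k}` (modelled as a setoid on `Fin k`), `Δ_π` is the
diagonal operator on `(ℂ^N)^{⊗k}` whose entry at the tuple `i : Fin k → Fin N` is `1` if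
`π` refines the kernel of `i` (i.e. `i` is constant on the blocks of `π`) and `0` otherwise. -/
noncomputable def DeltaOp (N k : ℕ) (π : Setoid (Fin k)) :
    Matrix (Fin k → Fin N) (Fin k → Fin N) ℂ :=
  Matrix.diagonal fun i : Fin k → Fin N =>
    if ∀ u v : Fin k, π.r u v → i u = i v then (1 : ℂ) else 0

instance setoidFinite {k : ℕ} : Finite (Setoid (Fin k)) :=
  Finite.of_injective (fun s : Setoid (Fin k) => s.r)
    (fun _ _ hst => Setoid.ext fun x y => iff_of_eq (congrFun (congrFun hst x) y))

/-- If `N ≥ k`, the family `(Δ_π)`, indexed by all set partitions `π`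
of `{1,…,k}`, is linearly independent in `End((ℂ^N)^{⊗k})`. -/
theorem deltaOp_linearIndependent {N k : ℕ} (h : k ≤ N) :
    LinearIndependent ℂ (fun π : Setoid (Fin k) => DeltaOp N k π) := by
  have key : ∀ π : Setoid (Fin k), ∃ i : Fin k → Fin N,
      ∀ u v : Fin k, i u = i v ↔ π.r u v := by
    intro π
    have : Fintype (Quotient π) := Fintype.ofFinite _
    have hcard : Fintype.card (Quotient π) ≤ Fintype.card (Fin N) := by
      calc Fintype.card (Quotient π) ≤ Fintype.card (Fin k) :=
            Fintype.card_le_of_surjective _ Quotient.mk_surjective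
        _ ≤ Fintype.card (Fin N) := by simpa using h
    obtain ⟨e⟩ := Function.Embedding.nonempty_of_card_le hcard
    refine ⟨fun u => e ⟦u⟧, fun u v => ?_⟩
    constructor
    · intro huv
      exact Quotient.eq.mp (e.injective huv)
    · intro huv
      exact congrArg e (Quotient.sound huv)
  rw [linearIndependent_iff']
  intro s g hsum
  have main : ∀ π : Setoid (Fin k), π ∈ s → g π = 0 := by
    intro π
    induction π using WellFoundedLT.induction with
    | ind π IH =>
      intro hπ
      obtain ⟨i, hi⟩ := key π
      have h0 := congrFun (congrFun hsum i) i
      simp only [Matrix.sum_apply, Matrix.smul_apply, DeltaOp, Matrix.diagonal_apply_eq,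
        smul_eq_mul, Matrix.zero_apply] at h0
      have step : ∀ π' ∈ s, g π' * (if ∀ u v : Fin k, π'.r u v → i u = i v then (1:ℂ) else 0)
          = if π' = π then g π else 0 := by
        intro π' hπ'
        by_cases hle : ∀ u v : Fin k, π'.r u v → i u = i v
        · have hle' : π' ≤ π := fun u v huv => (hi u v).mp (hle u v huv)
          by_cases heq : π' = π
          · subst heq; rw [if_pos hle, if_pos rfl, mul_one]
          · have hz : g π' = 0 := IH π' (lt_of_le_of_ne hle' heq) hπ'
            rw [if_neg heq, hz, zero_mul]
        · have heq : π' ≠ π := by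
            rintro rfl
            exact hle fun u v huv => (hi u v).mpr huv
          rw [if_neg hle, if_neg heq, mul_zero]
      rw [Finset.sum_congr rfl step, Finset.sum_ite_eq' s π (fun _ => g π)] at h0
      simpa [hπ] using h0
  exact main
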